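/- The nil radical R of the Clifford algebra C = C(p,q,z) has a grading R = ⊕_{i≥1} R_i, where R_i is the linear span of basis elements e_I e_J e_K with I ⊆ P, J ⊆ M, K ⊆ Z and |K| = i, and this satisfies R_i · R_j ⊆ R_{i+j}. -/

import Mathlib

open Classical in
/-- The weight of generator `i`: `1` on `P`, `-1` on `M`, `0` elsewhere. -/
noncomputable def cliffordWeight {ι : Type} (P M : Set ι) (i : ι) : ℝ :=
  if i ∈ P then 1 else if i ∈ M then -1 else 0

/-- The diagonal bilinear form `B(x,y) = ∑ i, w i * x i * y i` on `ι →₀ ℝ`. -/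
noncomputable def cliffordBilin {ι : Type} (P M : Set ι) :
    (ι →₀ ℝ) →ₗ[ℝ] (ι →₀ ℝ) →ₗ[ℝ] ℝ :=
  Finsupp.lsum ℝ fun i =>
    LinearMap.toSpanSingleton ℝ ((ι →₀ ℝ) →ₗ[ℝ] ℝ) (cliffordWeight P M i • Finsupp.lapply i)

/-- The quadratic form of `C(p,q,z)`. -/
noncomputable def cliffordQ {ι : Type} (P M : Set ι) : QuadraticForm ℝ (ι →₀ ℝ) :=
  LinearMap.BilinMap.toQuadraticMap (cliffordBilin P M)

/-- The Clifford algebra `C(p,q,z)` (`Z` is the complement of `P ∪ M` in `ι`). -/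
noncomputable abbrev Cl {ι : Type} (P M : Set ι) := CliffordAlgebra (cliffordQ P M)

/-- The generator `e_i` of `C(p,q,z)`. -/
noncomputable def gen {ι : Type} (P M : Set ι) (i : ι) : Cl P M :=
  CliffordAlgebra.ι (cliffordQ P M) (Finsupp.single i 1)

/-- The product `e_I` over a finite ordered subset `I`. -/
noncomputable def prodGen {ι : Type} [LinearOrder ι] (P M : Set ι) (s : Finset ι) : Cl P M :=
  ((s.sort (· ≤ ·)).map (gen P M)).prod

/-- The subalgebra `C(p,q)` generated by the `e_λ`, `λ ∈ P ∪ M`. -/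
noncomputable def Cpq {ι : Type} (P M : Set ι) : Subalgebra ℝ (Cl P M) :=
  Algebra.adjoin ℝ (gen P M '' (P ∪ M))

/-- The ideal generated by the nilpotent generators `e_λ`, `λ ∈ Z`. -/
noncomputable def nilGenIdeal {ι : Type} (P M Z : Set ι) : TwoSidedIdeal (Cl P M) :=
  TwoSidedIdeal.span (gen P M '' Z)

/-- The nil radical of a ring: the supremum (sum) of all nil two-sided ideals. -/
def nilRad (A : Type*) [Ring A] : TwoSidedIdeal A :=
  sSup {I : TwoSidedIdeal A | ∀ x ∈ I, IsNilpotent x}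

/-- A two-sided ideal `I` is nilpotent: `Iⁿ = 0`, phrased via products of `n` elements. -/
def TwoSidedIdeal.IsNilpotentIdeal {A : Type*} [Ring A] (I : TwoSidedIdeal A) : Prop :=
  ∃ n : ℕ, 0 < n ∧ ∀ l : List A, l.length = n → (∀ x ∈ l, x ∈ I) → l.prod = 0

/-- A two-sided ideal is prime. -/
def TwoSidedIdeal.IsPrimeIdeal {A : Type*} [Ring A] (I : TwoSidedIdeal A) : Prop :=
  I ≠ ⊤ ∧ ∀ J K : TwoSidedIdeal A, (∀ a ∈ J, ∀ b ∈ K, a * b ∈ I) → J ≤ I ∨ K ≤ I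

/-- The `n`-th graded piece `R_n` of the nil radical: the span of the basis elements
`e_I e_J e_K` with `|K| = n`. -/
noncomputable def gradePiece {ι : Type} [LinearOrder ι] (P M Z : Set ι) (n : ℕ) :
    Submodule ℝ (Cl P M) :=
  Submodule.span ℝ {x | ∃ I J K : Finset ι, ↑I ⊆ P ∧ ↑J ⊆ M ∧ ↑K ⊆ Z ∧ K.card = n ∧
    x = prodGen P M I * prodGen P M J * prodGen P M K}

open Classical

variable {ι : Type} [LinearOrder ι] (P M Z : Set ι)

lemma bilin_single_left (i : ι) (a : ℝ) (y : ι →₀ ℝ) :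
    cliffordBilin P M (Finsupp.single i a) y = a * (cliffordWeight P M i * y i) := by
  rw [cliffordBilin, Finsupp.lsum_single]
  simp [LinearMap.toSpanSingleton_apply, mul_assoc]

lemma cliffordQ_single (i : ι) :
    cliffordQ P M (Finsupp.single i (1:ℝ)) = cliffordWeight P M i := by
  rw [cliffordQ, LinearMap.BilinMap.toQuadraticMap_apply, bilin_single_left]
  simp

lemma gen_mul_self (i : ι) :
    gen P M i * gen P M i = algebraMap ℝ (Cl P M) (cliffordWeight P M i) := by
  rw [gen, CliffordAlgebra.ι_sq_scalar, cliffordQ_single]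

lemma gen_anticomm {i j : ι} (h : i ≠ j) :
    gen P M i * gen P M j = -(gen P M j * gen P M i) := by
  have h2 := CliffordAlgebra.ι_mul_ι_add_swap (Q := cliffordQ P M)
    (Finsupp.single i 1) (Finsupp.single j 1)
  rw [cliffordQ, LinearMap.BilinMap.polar_toQuadraticMap, bilin_single_left,
    bilin_single_left] at h2
  rw [Finsupp.single_apply, Finsupp.single_apply, if_neg h, if_neg (Ne.symm h)] at h2
  simp only [mul_zero, add_zero, map_zero] at h2
  exact eq_neg_of_add_eq_zero_left h2
set_option linter.unusedSectionVars false

lemma perm_scale : ∀ {l₁ l₂ : List ι}, l₁.Perm l₂ → l₁.Nodup →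
    ∃ c : ℝ, (l₁.map (gen P M)).prod = c • (l₂.map (gen P M)).prod := by
  intro l₁ l₂ h
  induction h with
  | nil => exact fun _ => ⟨1, by simp⟩
  | cons x h ih =>
    intro hn
    obtain ⟨c, hc⟩ := ih hn.of_cons
    exact ⟨c, by simp [hc, mul_smul_comm]⟩
  | swap x y l =>
    intro hn
    have hxy : y ≠ x := by
      intro he
      exact (List.nodup_cons.mp hn).1 (he ▸ List.mem_cons_self (a := x) (l := l))
    refine ⟨-1, ?_⟩
    simp only [List.map_cons, List.prod_cons, ← mul_assoc]
    rw [gen_anticomm P M hxy]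
    simp
  | trans h1 h2 ih1 ih2 =>
    intro hn
    obtain ⟨c1, hc1⟩ := ih1 hn
    obtain ⟨c2, hc2⟩ := ih2 (h1.nodup hn)
    exact ⟨c1 * c2, by rw [hc1, hc2, smul_smul]⟩

lemma gen_mul_erase : ∀ (l : List ι) (a : ι), a ∈ l →
    ∃ c : ℝ, gen P M a * (l.map (gen P M)).prod
      = (c * cliffordWeight P M a) • ((l.erase a).map (gen P M)).prod := by
  intro l
  induction l with
  | nil => simp
  | cons b t ih =>
    intro a ha
    by_cases hab : a = b
    · subst hab
      refine ⟨1, ?_⟩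
      rw [List.erase_cons_head]
      simp only [List.map_cons, List.prod_cons, ← mul_assoc, gen_mul_self]
      rw [one_mul, Algebra.smul_def]
    · have ha' : a ∈ t := by
        rcases List.mem_cons.mp ha with h | h
        · exact absurd h hab
        · exact h
      obtain ⟨c, hc⟩ := ih a ha'
      refine ⟨-c, ?_⟩
      have herase : (b :: t).erase a = b :: t.erase a :=
        List.erase_cons_tail (by simp [Ne.symm hab])
      rw [herase]
      simp only [List.map_cons, List.prod_cons, ← mul_assoc]
      rw [gen_anticomm P M hab, neg_mul, mul_assoc, hc, mul_smul_comm, ← neg_smul, neg_mul]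
/-- The number of letters from `Z` in a word. -/
noncomputable def zCnt (Z : Set ι) (l : List ι) : ℕ := l.countP (fun x => decide (x ∈ Z))

lemma word_append (l₁ l₂ : List ι) :
    ((l₁ ++ l₂).map (gen P M)).prod = (l₁.map (gen P M)).prod * (l₂.map (gen P M)).prod := by
  rw [List.map_append, List.prod_append]

lemma monoWord (I J K : Finset ι) :
    prodGen P M I * prodGen P M J * prodGen P M K =
    ((I.sort (· ≤ ·) ++ J.sort (· ≤ ·) ++ K.sort (· ≤ ·)).map (gen P M)).prod := by
  rw [word_append, word_append]; rfl

lemma mono_nodup (hPM : Disjoint P M) (hPZ : Disjoint P Z) (hMZ : Disjoint M Z)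
    {I J K : Finset ι} (hI : ↑I ⊆ P) (hJ : ↑J ⊆ M) (hK : ↑K ⊆ Z) :
    (I.sort (· ≤ ·) ++ J.sort (· ≤ ·) ++ K.sort (· ≤ ·)).Nodup := by
  refine List.Nodup.append (List.Nodup.append (Finset.sort_nodup _ _) (Finset.sort_nodup _ _) ?_)
    (Finset.sort_nodup _ _) ?_
  · intro a ha ha'
    exact Set.disjoint_left.mp hPM (hI (Finset.mem_sort _ |>.mp ha))
      (hJ (Finset.mem_sort _ |>.mp ha'))
  · intro a ha ha'
    have haZ : a ∈ Z := hK (Finset.mem_sort _ |>.mp ha')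
    rcases List.mem_append.mp ha with h | h
    · exact Set.disjoint_left.mp hPZ (hI (Finset.mem_sort _ |>.mp h)) haZ
    · exact Set.disjoint_left.mp hMZ (hJ (Finset.mem_sort _ |>.mp h)) haZ

lemma zCnt_mono (hPZ : Disjoint P Z) (hMZ : Disjoint M Z)
    {I J K : Finset ι} (hI : ↑I ⊆ P) (hJ : ↑J ⊆ M) (hK : ↑K ⊆ Z) :
    zCnt Z (I.sort (· ≤ ·) ++ J.sort (· ≤ ·) ++ K.sort (· ≤ ·)) = K.card := by
  rw [zCnt, List.countP_append, List.countP_append]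
  have h1 : (I.sort (· ≤ ·)).countP (fun x => decide (x ∈ Z)) = 0 := by
    rw [List.countP_eq_zero]
    intro a ha
    simpa using Set.disjoint_left.mp hPZ (hI (Finset.mem_sort _ |>.mp ha))
  have h2 : (J.sort (· ≤ ·)).countP (fun x => decide (x ∈ Z)) = 0 := by
    rw [List.countP_eq_zero]
    intro a ha
    simpa using Set.disjoint_left.mp hMZ (hJ (Finset.mem_sort _ |>.mp ha))
  have h3 : (K.sort (· ≤ ·)).countP (fun x => decide (x ∈ Z)) = (K.sort (· ≤ ·)).length := by
    rw [List.countP_eq_length]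
    intro a ha
    simpa using hK (Finset.mem_sort _ |>.mp ha)
  rw [h1, h2, h3, Finset.length_sort]
  simp

lemma word_mem_of_nodup (hPM : Disjoint P M) (hPZ : Disjoint P Z) (hMZ : Disjoint M Z)
    (hU : P ∪ M ∪ Z = Set.univ) (l : List ι) (hl : l.Nodup) :
    (l.map (gen P M)).prod ∈ gradePiece P M Z (zCnt Z l) := by
  classical
  set I := l.toFinset.filter (fun x => x ∈ P) with hIdef
  set J := l.toFinset.filter (fun x => x ∈ M) with hJdef
  set K := l.toFinset.filter (fun x => x ∈ Z) with hKdef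
  have hI : ↑I ⊆ P := fun a ha => (Finset.mem_filter.mp ha).2
  have hJ : ↑J ⊆ M := fun a ha => (Finset.mem_filter.mp ha).2
  have hK : ↑K ⊆ Z := fun a ha => (Finset.mem_filter.mp ha).2
  have hnd := mono_nodup P M Z hPM hPZ hMZ hI hJ hK
  have htf : l.toFinset = ((I.sort (· ≤ ·) ++ J.sort (· ≤ ·) ++ K.sort (· ≤ ·))).toFinset := by
    simp only [List.toFinset_append, Finset.sort_toFinset]
    ext a
    simp only [Finset.mem_union, hIdef, hJdef, hKdef, Finset.mem_filter]
    constructor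
    · intro ha
      have : a ∈ P ∪ M ∪ Z := by rw [hU]; trivial
      rcases this with (h | h) | h
      · exact Or.inl (Or.inl ⟨ha, h⟩)
      · exact Or.inl (Or.inr ⟨ha, h⟩)
      · exact Or.inr ⟨ha, h⟩
    · rintro ((⟨h, _⟩ | ⟨h, _⟩) | ⟨h, _⟩) <;> exact h
  have hperm : l.Perm (I.sort (· ≤ ·) ++ J.sort (· ≤ ·) ++ K.sort (· ≤ ·)) :=
    List.perm_of_nodup_nodup_toFinset_eq hl hnd htf
  obtain ⟨c, hc⟩ := perm_scale P M hperm hl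
  have hcard : K.card = zCnt Z l := by
    have hzl : zCnt Z l = zCnt Z (I.sort (· ≤ ·) ++ J.sort (· ≤ ·) ++ K.sort (· ≤ ·)) :=
      hperm.countP_eq _
    rw [hzl, zCnt_mono P M Z hPZ hMZ hI hJ hK]
  rw [hc, ← monoWord]
  exact Submodule.smul_mem _ _ (Submodule.subset_span ⟨I, J, K, hI, hJ, hK, hcard, rfl⟩)
lemma weight_zero_of_Z (hPZ : Disjoint P Z) (hMZ : Disjoint M Z) {a : ι} (ha : a ∈ Z) :
    cliffordWeight P M a = 0 := by
  rw [cliffordWeight, if_neg (fun h => Set.disjoint_left.mp hPZ h ha),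
    if_neg (fun h => Set.disjoint_left.mp hMZ h ha)]

lemma word_mem (hPM : Disjoint P M) (hPZ : Disjoint P Z) (hMZ : Disjoint M Z)
    (hU : P ∪ M ∪ Z = Set.univ) :
    ∀ l : List ι, (l.map (gen P M)).prod ∈ gradePiece P M Z (zCnt Z l) := by
  classical
  intro l
  induction l with
  | nil => exact word_mem_of_nodup P M Z hPM hPZ hMZ hU [] List.nodup_nil
  | cons a t iht =>
    -- reduce to: gen a * x ∈ gradePiece (zCnt (a::t)) for x ∈ gradePiece (zCnt t)
    have key : ∀ x ∈ gradePiece P M Z (zCnt Z t),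
        gen P M a * x ∈ gradePiece P M Z (zCnt Z (a :: t)) := by
      intro x hx
      induction hx using Submodule.span_induction with
      | mem y hy =>
        obtain ⟨I, J, K, hI, hJ, hK, hcard, rfl⟩ := hy
        rw [monoWord]
        set L := I.sort (· ≤ ·) ++ J.sort (· ≤ ·) ++ K.sort (· ≤ ·) with hLdef
        have hLnd := mono_nodup P M Z hPM hPZ hMZ hI hJ hK
        have hLcnt : zCnt Z L = zCnt Z t := by
          rw [zCnt_mono P M Z hPZ hMZ hI hJ hK] at *
          exact hcard
        have hword : gen P M a * (L.map (gen P M)).prod = (((a :: L)).map (gen P M)).prod := by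
          simp
        rw [hword]
        have hcnt_cons : ∀ u : List ι, zCnt Z (a :: u) = (if a ∈ Z then 1 else 0) + zCnt Z u := by
          intro u
          rw [zCnt, zCnt, List.countP_cons]
          by_cases haZ : a ∈ Z <;> simp [haZ, Nat.add_comm]
        by_cases haL : a ∈ L
        · obtain ⟨c, hc⟩ := gen_mul_erase P M L a haL
          rw [show ((a :: L).map (gen P M)).prod = gen P M a * (L.map (gen P M)).prod by simp, hc]
          by_cases haZ : a ∈ Z
          · rw [weight_zero_of_Z P M Z hPZ hMZ haZ, mul_zero, zero_smul]
            exact Submodule.zero_mem _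
          · have herasecnt : zCnt Z (L.erase a) = zCnt Z (a :: t) := by
              have hp := (List.perm_cons_erase haL).countP_eq (fun x => decide (x ∈ Z))
              rw [show ∀ u, List.countP (fun x => decide (x ∈ Z)) u = zCnt Z u from fun _ => rfl,
                show ∀ u, List.countP (fun x => decide (x ∈ Z)) (a :: u) = zCnt Z (a :: u)
                  from fun _ => rfl] at hp
              rw [hcnt_cons, if_neg haZ, zero_add, ← hLcnt, hp, hcnt_cons, if_neg haZ, zero_add]
            rw [← herasecnt]
            exact Submodule.smul_mem _ _
              (word_mem_of_nodup P M Z hPM hPZ hMZ hU _ (hLnd.erase a))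
        · have hnd' : (a :: L).Nodup := List.nodup_cons.mpr ⟨haL, hLnd⟩
          have : zCnt Z (a :: L) = zCnt Z (a :: t) := by
            rw [hcnt_cons, hcnt_cons, hLcnt]
          rw [← this]
          exact word_mem_of_nodup P M Z hPM hPZ hMZ hU _ hnd'
      | zero => rw [mul_zero]; exact Submodule.zero_mem _
      | add y z _ _ hy hz => rw [mul_add]; exact Submodule.add_mem _ hy hz
      | smul r y _ hy => rw [mul_smul_comm]; exact Submodule.smul_mem _ _ hy
    simpa using key _ iht
lemma grade_mul (hPM : Disjoint P M) (hPZ : Disjoint P Z) (hMZ : Disjoint M Z)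
    (hU : P ∪ M ∪ Z = Set.univ) {m n : ℕ} {x y : Cl P M}
    (hx : x ∈ gradePiece P M Z m) (hy : y ∈ gradePiece P M Z n) :
    x * y ∈ gradePiece P M Z (m + n) := by
  classical
  induction hx using Submodule.span_induction with
  | mem u hu =>
    induction hy using Submodule.span_induction with
    | mem v hv =>
      obtain ⟨I, J, K, hI, hJ, hK, hcard, rfl⟩ := hu
      obtain ⟨I', J', K', hI', hJ', hK', hcard', rfl⟩ := hv
      rw [monoWord, monoWord, ← word_append]
      have : zCnt Z ((I.sort (· ≤ ·) ++ J.sort (· ≤ ·) ++ K.sort (· ≤ ·)) ++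
          (I'.sort (· ≤ ·) ++ J'.sort (· ≤ ·) ++ K'.sort (· ≤ ·))) = m + n := by
        rw [zCnt, List.countP_append]
        rw [show ∀ u, List.countP (fun x => decide (x ∈ Z)) u = zCnt Z u from fun _ => rfl,
          show ∀ u, List.countP (fun x => decide (x ∈ Z)) u = zCnt Z u from fun _ => rfl]
        rw [zCnt_mono P M Z hPZ hMZ hI hJ hK, zCnt_mono P M Z hPZ hMZ hI' hJ' hK', hcard, hcard']
      rw [← this]
      exact word_mem P M Z hPM hPZ hMZ hU _
    | zero => rw [mul_zero]; exact Submodule.zero_mem _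
    | add y z _ _ h1 h2 => rw [mul_add]; exact Submodule.add_mem _ h1 h2
    | smul r y _ h1 => rw [mul_smul_comm]; exact Submodule.smul_mem _ _ h1
  | zero => rw [zero_mul]; exact Submodule.zero_mem _
  | add u v _ _ h1 h2 => rw [add_mul]; exact Submodule.add_mem _ h1 h2
  | smul r u _ h1 => rw [smul_mul_assoc]; exact Submodule.smul_mem _ _ h1

lemma prodGen_empty : prodGen P M (∅ : Finset ι) = 1 := by
  rw [prodGen, Finset.sort_empty]; rfl

lemma prodGen_singleton (a : ι) : prodGen P M {a} = gen P M a := by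
  rw [prodGen, Finset.sort_singleton]; simp

lemma gen_mem_grade_one {k : ι} (hk : k ∈ Z) : gen P M k ∈ gradePiece P M Z 1 := by
  apply Submodule.subset_span
  refine ⟨∅, ∅, {k}, by simp, by simp, by simp [hk], by simp, ?_⟩
  rw [prodGen_empty, prodGen_singleton, one_mul, one_mul]

lemma gen_mem_grade (hU : P ∪ M ∪ Z = Set.univ) (a : ι) :
    ∃ d : ℕ, gen P M a ∈ gradePiece P M Z d := by
  have : a ∈ P ∪ M ∪ Z := by rw [hU]; trivial
  rcases this with (h | h) | h
  · exact ⟨0, Submodule.subset_span ⟨{a}, ∅, ∅, by simp [h], by simp, by simp, by simp,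
      by rw [prodGen_empty, prodGen_singleton, mul_one, mul_one]⟩⟩
  · exact ⟨0, Submodule.subset_span ⟨∅, {a}, ∅, by simp, by simp [h], by simp, by simp,
      by rw [prodGen_empty, prodGen_singleton, one_mul, mul_one]⟩⟩
  · exact ⟨1, gen_mem_grade_one P M Z h⟩
lemma iota_eq_sum (v : ι →₀ ℝ) :
    CliffordAlgebra.ι (cliffordQ P M) v = v.sum (fun i r => r • gen P M i) := by
  conv_lhs => rw [← Finsupp.sum_single v, map_finsuppSum]
  refine Finsupp.sum_congr fun i _ => ?_
  rw [gen, ← LinearMap.map_smul, Finsupp.smul_single, smul_eq_mul, mul_one]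

/-- The candidate for `R`: the sum of all graded pieces of degree at least 1. -/
noncomputable def Tsup : Submodule ℝ (Cl P M) := ⨆ i : {i : ℕ // 1 ≤ i}, gradePiece P M Z ↑i

section Tclosure

variable (hPM : Disjoint P M) (hPZ : Disjoint P Z) (hMZ : Disjoint M Z)
    (hU : P ∪ M ∪ Z = Set.univ)

lemma grade_le_T {n : ℕ} (hn : 1 ≤ n) : gradePiece P M Z n ≤ Tsup P M Z :=
  le_iSup (fun i : {i : ℕ // 1 ≤ i} => gradePiece P M Z ↑i) ⟨n, hn⟩

include hPM hPZ hMZ hU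

lemma gen_mul_T {a : ι} {x : Cl P M} (hx : x ∈ Tsup P M Z) : gen P M a * x ∈ Tsup P M Z := by
  rw [Tsup] at hx
  refine Submodule.iSup_induction _ (motive := fun y => gen P M a * y ∈ Tsup P M Z) hx ?_ ?_ ?_
  · intro i y hy
    obtain ⟨d, hd⟩ := gen_mem_grade P M Z hU a
    exact grade_le_T P M Z (le_trans i.2 (Nat.le_add_left _ _))
      (grade_mul P M Z hPM hPZ hMZ hU hd hy)
  · show gen P M a * 0 ∈ Tsup P M Z
    rw [mul_zero]; exact Submodule.zero_mem _
  · intro y z hy hz; rw [mul_add]; exact Submodule.add_mem _ hy hz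

lemma T_mul_gen {a : ι} {x : Cl P M} (hx : x ∈ Tsup P M Z) : x * gen P M a ∈ Tsup P M Z := by
  rw [Tsup] at hx
  refine Submodule.iSup_induction _ (motive := fun y => y * gen P M a ∈ Tsup P M Z) hx ?_ ?_ ?_
  · intro i y hy
    obtain ⟨d, hd⟩ := gen_mem_grade P M Z hU a
    exact grade_le_T P M Z (le_trans i.2 (Nat.le_add_right _ _))
      (grade_mul P M Z hPM hPZ hMZ hU hy hd)
  · show (0:Cl P M) * gen P M a ∈ Tsup P M Z
    rw [zero_mul]; exact Submodule.zero_mem _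
  · intro y z hy hz; rw [add_mul]; exact Submodule.add_mem _ hy hz

lemma mul_left_T (a : Cl P M) : ∀ x ∈ Tsup P M Z, a * x ∈ Tsup P M Z := by
  induction a using CliffordAlgebra.induction with
  | algebraMap r =>
    intro x hx
    rw [Algebra.algebraMap_eq_smul_one, smul_mul_assoc, one_mul]
    exact Submodule.smul_mem _ _ hx
  | ι v =>
    intro x hx
    rw [iota_eq_sum, Finsupp.sum_mul]
    refine Submodule.sum_mem _ fun i _ => ?_
    show (v i) • gen P M i * x ∈ Tsup P M Z
    rw [smul_mul_assoc]
    exact Submodule.smul_mem _ _ (gen_mul_T P M Z hPM hPZ hMZ hU hx)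
  | mul a b ha hb => intro x hx; rw [mul_assoc]; exact ha _ (hb _ hx)
  | add a b ha hb => intro x hx; rw [add_mul]; exact Submodule.add_mem _ (ha _ hx) (hb _ hx)

lemma mul_right_T (a : Cl P M) : ∀ x ∈ Tsup P M Z, x * a ∈ Tsup P M Z := by
  induction a using CliffordAlgebra.induction with
  | algebraMap r =>
    intro x hx
    rw [Algebra.algebraMap_eq_smul_one, mul_smul_comm, mul_one]
    exact Submodule.smul_mem _ _ hx
  | ι v =>
    intro x hx
    rw [iota_eq_sum, Finsupp.mul_sum]
    refine Submodule.sum_mem _ fun i _ => ?_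
    show x * ((v i) • gen P M i) ∈ Tsup P M Z
    rw [mul_smul_comm]
    exact Submodule.smul_mem _ _ (T_mul_gen P M Z hPM hPZ hMZ hU hx)
  | mul a b ha hb => intro x hx; rw [← mul_assoc]; exact hb _ (ha _ hx)
  | add a b ha hb => intro x hx; rw [mul_add]; exact Submodule.add_mem _ (ha _ hx) (hb _ hx)

lemma T_eq_span_ideal :
    Tsup P M Z = Submodule.span ℝ (nilGenIdeal P M Z : Set (Cl P M)) := by
  apply le_antisymm
  · refine iSup_le fun i => Submodule.span_le.mpr ?_
    rintro x ⟨I, J, K, hI, hJ, hK, hcard, rfl⟩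
    apply Submodule.subset_span
    cases hsort : K.sort (· ≤ ·) with
    | nil =>
      exfalso
      have hlen := Finset.length_sort (α := ι) (· ≤ · : ι → ι → Prop) (s := K)
      rw [hsort] at hlen
      simp only [List.length_nil] at hlen
      have := i.2
      omega
    | cons k t =>
      have hkZ : k ∈ Z := hK (Finset.mem_sort _ |>.mp (by rw [hsort]; exact List.mem_cons_self))
      have hprod : prodGen P M K = gen P M k * (t.map (gen P M)).prod := by
        rw [prodGen, hsort]; simp
      show _ ∈ nilGenIdeal P M Z
      rw [hprod]
      exact TwoSidedIdeal.mul_mem_left _ _ _ (TwoSidedIdeal.mul_mem_right _ _ _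
        (TwoSidedIdeal.subset_span (Set.mem_image_of_mem _ hkZ)))
  · refine Submodule.span_le.mpr fun x hx => ?_
    let Jideal : TwoSidedIdeal (Cl P M) := TwoSidedIdeal.mk' (Tsup P M Z)
      (Submodule.zero_mem _) (fun h1 h2 => Submodule.add_mem _ h1 h2)
      (fun h => Submodule.neg_mem _ h)
      (fun {a y} h => mul_left_T P M Z hPM hPZ hMZ hU a y h)
      (fun {y a} h => mul_right_T P M Z hPM hPZ hMZ hU a y h)
    have hsub : gen P M '' Z ⊆ (Jideal : Set (Cl P M)) := by
      rintro - ⟨k, hk, rfl⟩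
      show gen P M k ∈ Jideal
      rw [TwoSidedIdeal.mem_mk']
      exact grade_le_T P M Z le_rfl (gen_mem_grade_one P M Z hk)
    have := TwoSidedIdeal.mem_span_iff.mp hx Jideal hsub
    rwa [TwoSidedIdeal.mem_mk'] at this

end Tclosure
/-- Scaling factors: `1` on `P ∪ M`, `2` on the rest. -/
noncomputable def cfun : ι → ℝ := fun i => if i ∈ P ∪ M then 1 else 2

/-- The linear map scaling each coordinate `i` by `cfun P M i`. -/
noncomputable def fmap : (ι →₀ ℝ) →ₗ[ℝ] (ι →₀ ℝ) :=
  Finsupp.lsum ℝ fun i => cfun P M i • Finsupp.lsingle i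

lemma fmap_single (i : ι) (r : ℝ) :
    fmap P M (Finsupp.single i r) = Finsupp.single i (cfun P M i * r) := by
  rw [fmap, Finsupp.lsum_single]
  simp [Finsupp.smul_single']

lemma weight_mul_cfun_sq (i : ι) :
    cliffordWeight P M i * (cfun P M i * cfun P M i) = cliffordWeight P M i := by
  by_cases h : i ∈ P ∪ M
  · rw [cfun, if_pos h]; ring
  · have : cliffordWeight P M i = 0 := by
      rw [cliffordWeight, if_neg (fun hp => h (Or.inl hp)), if_neg (fun hm => h (Or.inr hm))]
    rw [this]; ring

lemma bilin_fmap (x y : ι →₀ ℝ) :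
    cliffordBilin P M (fmap P M x) (fmap P M y) = cliffordBilin P M x y := by
  induction x using Finsupp.induction_linear with
  | zero => simp
  | add a b ha hb => simp [map_add, ha, hb]
  | single i r =>
    induction y using Finsupp.induction_linear with
    | zero => simp
    | add a b ha hb => simp [map_add, ha, hb]
    | single j s =>
      rw [fmap_single, fmap_single, bilin_single_left, bilin_single_left,
        Finsupp.single_apply, Finsupp.single_apply]
      by_cases h : j = i
      · subst h
        simp only [eq_self_iff_true, if_true]
        have hw := weight_mul_cfun_sq P M j
        linear_combination r * s * hw
      · simp [h]

lemma cliffordQ_fmap (x : ι →₀ ℝ) : cliffordQ P M (fmap P M x) = cliffordQ P M x := by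
  rw [cliffordQ, LinearMap.BilinMap.toQuadraticMap_apply,
    LinearMap.BilinMap.toQuadraticMap_apply, bilin_fmap]

/-- The isometry given by `fmap`. -/
noncomputable def fiso : QuadraticMap.Isometry (cliffordQ P M) (cliffordQ P M) :=
  { toLinearMap := fmap P M, map_app' := cliffordQ_fmap P M }

/-- The scaling algebra endomorphism of `Cl P M`. -/
noncomputable def phi : Cl P M →ₐ[ℝ] Cl P M := CliffordAlgebra.map (fiso P M)

lemma phi_gen (i : ι) : phi P M (gen P M i) = cfun P M i • gen P M i := by
  rw [gen, phi, CliffordAlgebra.map_apply_ι]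
  show CliffordAlgebra.ι (cliffordQ P M) (fmap P M (Finsupp.single i 1)) = _
  rw [fmap_single, mul_one,
    show Finsupp.single i (cfun P M i) = cfun P M i • Finsupp.single i (1:ℝ) by
      rw [Finsupp.smul_single', mul_one],
    LinearMap.map_smul]

lemma list_smul_prod : ∀ l : List ι,
    (l.map (fun i => cfun P M i • gen P M i)).prod
      = (l.map (cfun P M)).prod • (l.map (gen P M)).prod := by
  intro l
  induction l with
  | nil => simp
  | cons a t ih => simp [ih, smul_smul, smul_mul_assoc, mul_smul_comm, mul_comm]

lemma phi_prodGen (s : Finset ι) :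
    phi P M (prodGen P M s) = ((s.sort (· ≤ ·)).map (cfun P M)).prod • prodGen P M s := by
  rw [prodGen, map_list_prod, List.map_map]
  rw [show (s.sort (· ≤ ·)).map (⇑(phi P M) ∘ gen P M)
      = (s.sort (· ≤ ·)).map (fun i => cfun P M i • gen P M i) from
    List.map_congr_left fun i _ => phi_gen P M i]
  exact list_smul_prod P M _

lemma phi_mono (hPZ : Disjoint P Z) (hMZ : Disjoint M Z) {I J K : Finset ι}
    (hI : ↑I ⊆ P) (hJ : ↑J ⊆ M) (hK : ↑K ⊆ Z) :
    phi P M (prodGen P M I * prodGen P M J * prodGen P M K)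
      = ((2:ℝ) ^ K.card) • (prodGen P M I * prodGen P M J * prodGen P M K) := by
  rw [map_mul, map_mul, phi_prodGen, phi_prodGen, phi_prodGen]
  have hIone : ((I.sort (· ≤ ·)).map (cfun P M)).prod = 1 := by
    apply List.prod_eq_one
    intro x hx
    obtain ⟨i, hi, rfl⟩ := List.mem_map.mp hx
    simp only [cfun]
    rw [if_pos (Set.mem_union_left _ (hI (Finset.mem_sort _ |>.mp hi)))]
  have hJone : ((J.sort (· ≤ ·)).map (cfun P M)).prod = 1 := by
    apply List.prod_eq_one
    intro x hx
    obtain ⟨i, hi, rfl⟩ := List.mem_map.mp hx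
    simp only [cfun]
    rw [if_pos (Set.mem_union_right _ (hJ (Finset.mem_sort _ |>.mp hi)))]
  have hKtwo : ((K.sort (· ≤ ·)).map (cfun P M)).prod = (2:ℝ) ^ K.card := by
    have hall : ∀ x ∈ (K.sort (· ≤ ·)).map (cfun P M), x = 2 := by
      intro x hx
      obtain ⟨i, hi, rfl⟩ := List.mem_map.mp hx
      have hiZ : i ∈ Z := hK (Finset.mem_sort _ |>.mp hi)
      simp only [cfun]
      rw [if_neg]
      rintro (h | h)
      · exact Set.disjoint_left.mp hPZ h hiZ
      · exact Set.disjoint_left.mp hMZ h hiZ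
    rw [List.prod_eq_pow_card _ 2 hall, List.length_map, Finset.length_sort]
  rw [hIone, hJone, hKtwo, one_smul, one_smul, mul_smul_comm]

lemma grade_le_eigen (hPZ : Disjoint P Z) (hMZ : Disjoint M Z) (n : ℕ) :
    gradePiece P M Z n ≤ Module.End.eigenspace (phi P M).toLinearMap ((2:ℝ) ^ n) := by
  refine Submodule.span_le.mpr ?_
  rintro x ⟨I, J, K, hI, hJ, hK, hcard, rfl⟩
  rw [SetLike.mem_coe, Module.End.mem_eigenspace_iff]
  show phi P M _ = _
  rw [phi_mono P M Z hPZ hMZ hI hJ hK, hcard]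

lemma grades_indep (hPZ : Disjoint P Z) (hMZ : Disjoint M Z) :
    iSupIndep (fun i : {i : ℕ // 1 ≤ i} => gradePiece P M Z ↑i) := by
  have hinj : Function.Injective (fun i : {i : ℕ // 1 ≤ i} => (2:ℝ) ^ (i : ℕ)) := by
    have hsm : StrictMono (fun n : ℕ => (2:ℝ) ^ n) :=
      fun m n h => by exact pow_lt_pow_right₀ one_lt_two h
    intro a b h
    exact Subtype.ext (hsm.injective h)
  have := ((Module.End.eigenspaces_iSupIndep (phi P M).toLinearMap).comp hinj)
  exact this.mono fun i => grade_le_eigen P M Z hPZ hMZ ↑i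
/-- STATEMENT 17: the nil radical `R` is graded, `R = ⊕_{i ≥ 1} R_i`, and
`R_i · R_j ⊆ R_{i+j}`. -/
theorem nilradical_grading {ι : Type} [LinearOrder ι] (P M Z : Set ι)
    (hPM : Disjoint P M) (hPZ : Disjoint P Z) (hMZ : Disjoint M Z)
    (hU : P ∪ M ∪ Z = Set.univ) :
    iSupIndep (fun i : {i : ℕ // 1 ≤ i} => gradePiece P M Z i) ∧
    (⨆ i : {i : ℕ // 1 ≤ i}, gradePiece P M Z i) =
      Submodule.span ℝ (nilGenIdeal P M Z : Set (Cl P M)) ∧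
    ∀ i j : ℕ, 1 ≤ i → 1 ≤ j →
      ∀ x ∈ gradePiece P M Z i, ∀ y ∈ gradePiece P M Z j,
        x * y ∈ gradePiece P M Z (i + j) := by

  refine ⟨grades_indep P M Z hPZ hMZ, ?_, ?_⟩
  · exact T_eq_span_ideal P M Z hPM hPZ hMZ hU
  · intro i j hi hj x hx y hy
    exact grade_mul P M Z hPM hPZ hMZ hU hx hy
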